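/- Let ω > 0 and let λ be a nonzero complex number such that it is not the case that Re(λ) = 0 and |λ| ≤ ω. Then ∫_{−ω}^{ω} (iν − λ)⁻¹ dν = −2·atan(ω/λ), where the integral is the interval integral of the ℂ-valued function ν ↦ (iν − λ)⁻¹ of the real variable ν. -/

import Mathlib

open Complex MeasureTheory intervalIntegral

/-- Principal complex arctangent: `atan z = (1/(2i))·(log(1+iz) − log(1−iz))`,
where `log` is the principal branch of the complex logarithm. -/
noncomputable def catan (z : ℂ) : ℂ :=
  (2 * Complex.I)⁻¹ * (Complex.log (1 + Complex.I * z) - Complex.log (1 - Complex.I * z))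

lemma slit_aux (ω : ℝ) (lam : ℂ) (hlam : lam ≠ 0)
    (h : ¬ (lam.re = 0 ∧ ‖lam‖ ≤ ω)) (ν : ℝ) (hν : |ν| ≤ ω) :
    (1 + Complex.I * (ν : ℂ) / lam) ∈ Complex.slitPlane := by
  rw [Complex.mem_slitPlane_iff]
  by_cases ha : lam.re = 0
  · have hb : ‖lam‖ = |lam.im| := by
      rw [Complex.norm_def, Complex.normSq_apply, ha]
      simp [Real.sqrt_sq_eq_abs, ← sq]
    have hbω : ω < |lam.im| := by
      by_contra hc
      exact h ⟨ha, hb ▸ le_of_not_gt hc⟩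
    have him : lam.im ≠ 0 := fun h0 => hlam (Complex.ext (by simp [ha]) (by simp [h0]))
    left
    have hlam' : lam = (lam.im : ℂ) * Complex.I := by
      apply Complex.ext <;> simp [ha]
    obtain ⟨b, hbdef⟩ : ∃ b : ℝ, lam.im = b := ⟨lam.im, rfl⟩
    rw [hbdef] at hlam' him hbω
    have hquot : Complex.I * (ν : ℂ) / lam = ((ν / b : ℝ) : ℂ) := by
      rw [hlam', mul_comm ((b : ℂ)) Complex.I, mul_div_mul_left _ _ Complex.I_ne_zero]
      push_cast
      ring
    rw [hquot]
    have h1 : |ν / b| < 1 := by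
      rw [abs_div, div_lt_one (abs_pos.mpr him)]
      exact lt_of_le_of_lt hν hbω
    have := abs_lt.mp h1
    simp only [Complex.add_re, Complex.one_re, Complex.ofReal_re]
    linarith [this.1]
  · by_cases hν0 : ν = 0
    · subst hν0; left; simp
    · right
      have : (Complex.I * (ν : ℂ) / lam).im = ν * lam.re / Complex.normSq lam := by
        rw [Complex.div_im]
        simp [Complex.normSq_apply, Complex.mul_re, Complex.mul_im]
      simp only [Complex.add_im, Complex.one_im, zero_add, this]
      exact div_ne_zero (mul_ne_zero hν0 ha) (Complex.normSq_pos.mpr hlam).ne'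

lemma slit_aux2 (ω : ℝ) (lam : ℂ) (hlam : lam ≠ 0)
    (h : ¬ (lam.re = 0 ∧ ‖lam‖ ≤ ω)) (ν : ℝ) (hν : |ν| ≤ ω) :
    (if lam.re = 0 then (-1 : ℂ) else 1) * (lam ^ 2 + (ν : ℂ) ^ 2) ∈ Complex.slitPlane := by
  by_cases ha : lam.re = 0
  · rw [if_pos ha]
    have hb : ‖lam‖ = |lam.im| := by
      rw [Complex.norm_def, Complex.normSq_apply, ha]
      simp [Real.sqrt_sq_eq_abs, ← sq]
    have hbω : ω < |lam.im| := by
      by_contra hc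
      exact h ⟨ha, hb ▸ le_of_not_gt hc⟩
    have hlam' : lam = (lam.im : ℂ) * Complex.I := by
      apply Complex.ext <;> simp [ha]
    have heq : (-1 : ℂ) * (lam ^ 2 + (ν : ℂ) ^ 2) = ((lam.im ^ 2 - ν ^ 2 : ℝ) : ℂ) := by
      rw [hlam']
      push_cast
      ring_nf
      simp [Complex.I_sq]
      ring
    rw [heq, Complex.mem_slitPlane_iff]
    left
    simp only [Complex.ofReal_re]
    have h1 : ν ^ 2 < lam.im ^ 2 := by
      have h2 : |ν| < |lam.im| := lt_of_le_of_lt hν hbω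
      have := mul_self_lt_mul_self (abs_nonneg ν) h2
      rw [abs_mul_abs_self, abs_mul_abs_self] at this
      nlinarith
    linarith
  · simp only [if_neg ha, one_mul, Complex.mem_slitPlane_iff]
    by_cases hb : lam.im = 0
    · left
      simp only [pow_two, Complex.add_re, Complex.mul_re, Complex.ofReal_re, Complex.ofReal_im, hb]
      have hpos : 0 < lam.re * lam.re := mul_self_pos.mpr ha
      nlinarith [mul_self_nonneg ν]
    · right
      simp only [pow_two, Complex.add_im, Complex.mul_im, Complex.ofReal_re, Complex.ofReal_im, hb]
      intro hcon
      have h2 : lam.re * lam.im = 0 := by linarith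
      rcases mul_eq_zero.mp h2 with h1 | h1
      exacts [ha h1, hb h1]

theorem stmt_7 (ω : ℝ) (hω : 0 < ω) (lam : ℂ) (hlam : lam ≠ 0)
    (h : ¬ (lam.re = 0 ∧ ‖lam‖ ≤ ω)) :
    (∫ ν : ℝ in (-ω)..ω, (Complex.I * (ν : ℂ) - lam)⁻¹) = -2 * catan ((ω : ℂ) / lam) := by
  set c : ℂ := if lam.re = 0 then (-1 : ℂ) else 1 with hc
  have hc0 : c ≠ 0 := by
    by_cases ha : lam.re = 0 <;> simp [hc, ha]
  have hIcc : Set.uIcc (-ω) ω = Set.Icc (-ω) ω := Set.uIcc_of_le (by linarith)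
  -- key facts
  have habs : ∀ ν : ℝ, ν ∈ Set.uIcc (-ω) ω → |ν| ≤ ω := by
    intro ν hν
    rw [hIcc] at hν
    exact abs_le.mpr ⟨hν.1, hν.2⟩
  have hp : ∀ ν : ℝ, |ν| ≤ ω → (1 + Complex.I * (ν : ℂ) / lam) ∈ Complex.slitPlane :=
    fun ν hν => slit_aux ω lam hlam h ν hν
  have hm : ∀ ν : ℝ, |ν| ≤ ω → (1 - Complex.I * (ν : ℂ) / lam) ∈ Complex.slitPlane := by
    intro ν hν
    have := slit_aux ω lam hlam h (-ν) (by rwa [abs_neg])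
    have heq : (1 + Complex.I * ((-ν : ℝ) : ℂ) / lam) = 1 - Complex.I * (ν : ℂ) / lam := by
      push_cast; ring
    rwa [heq] at this
  have hsq : ∀ ν : ℝ, |ν| ≤ ω → c * (lam ^ 2 + (ν : ℂ) ^ 2) ∈ Complex.slitPlane :=
    fun ν hν => slit_aux2 ω lam hlam h ν hν
  have hne : ∀ ν : ℝ, |ν| ≤ ω → Complex.I * (ν : ℂ) - lam ≠ 0 := by
    intro ν hν
    have h1 : (1 - Complex.I * (ν : ℂ) / lam) ≠ 0 := Complex.slitPlane_ne_zero (hm ν hν)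
    have heq : Complex.I * (ν : ℂ) - lam = -lam * (1 - Complex.I * (ν : ℂ) / lam) := by
      field_simp
      ring
    rw [heq]
    exact mul_ne_zero (neg_ne_zero.mpr hlam) h1
  -- the antiderivative
  set F : ℝ → ℂ := fun ν =>
    Complex.I / 2 * (Complex.log (1 + Complex.I * (ν : ℂ) / lam)
      - Complex.log (1 - Complex.I * (ν : ℂ) / lam))
    - Complex.I / 2 * Complex.log (c * (lam ^ 2 + (ν : ℂ) ^ 2)) with hF
  have hid : ∀ ν : ℝ, HasDerivAt (fun t : ℝ => (t : ℂ)) 1 ν := by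
    intro ν
    simpa using (hasDerivAt_id ν).ofReal_comp
  have hderiv : ∀ ν ∈ Set.uIcc (-ω) ω, HasDerivAt F ((Complex.I * (ν : ℂ) - lam)⁻¹) ν := by
    intro ν hν
    have hν' := habs ν hν
    have h1 : HasDerivAt (fun t : ℝ => 1 + Complex.I * (t : ℂ) / lam) (Complex.I * 1 / lam) ν :=
      (((hid ν).const_mul Complex.I).div_const lam).const_add 1
    have h2 : HasDerivAt (fun t : ℝ => 1 - Complex.I * (t : ℂ) / lam) (-(Complex.I * 1 / lam)) ν :=
      (((hid ν).const_mul Complex.I).div_const lam).const_sub 1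
    have hsq' : HasDerivAt (fun t : ℝ => ((t : ℂ)) ^ 2) (2 * (ν : ℂ)) ν := by
      have hmul := (hid ν).mul (hid ν)
      have hfun : (fun t : ℝ => ((t : ℂ)) ^ 2) = fun t : ℝ => (t : ℂ) * (t : ℂ) := by
        funext t; ring
      rw [hfun]
      convert hmul using 1
      · rfl
      · rfl
      ring
    have h3 : HasDerivAt (fun t : ℝ => c * (lam ^ 2 + (t : ℂ) ^ 2))
        (c * (2 * (ν : ℂ))) ν :=
      (hsq'.const_add (lam ^ 2)).const_mul c
    have hlog1 := h1.clog_real (hp ν hν')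
    have hlog2 := h2.clog_real (hm ν hν')
    have hlog3 := h3.clog_real (hsq ν hν')
    have hcomb := ((hlog1.sub hlog2).const_mul (Complex.I / 2)).sub
      (hlog3.const_mul (Complex.I / 2))
    convert hcomb using 1
    · rfl
    · rfl
    have e1 : (1 + Complex.I * (ν : ℂ) / lam) ≠ 0 := Complex.slitPlane_ne_zero (hp ν hν')
    have e2 : (1 - Complex.I * (ν : ℂ) / lam) ≠ 0 := Complex.slitPlane_ne_zero (hm ν hν')
    have e3 : lam ^ 2 + (ν : ℂ) ^ 2 ≠ 0 := by
      intro h0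
      exact Complex.slitPlane_ne_zero (hsq ν hν') (by rw [h0, mul_zero])
    have e4 := hne ν hν'
    have e5 : lam + Complex.I * (ν : ℂ) ≠ 0 := fun h0 =>
      hne (-ν) (by rwa [abs_neg]) (by push_cast; linear_combination -h0)
    have e6 : lam - Complex.I * (ν : ℂ) ≠ 0 := fun h0 =>
      e4 (by linear_combination -h0)
    field_simp
    have hI3 : Complex.I ^ 3 = -Complex.I := by
      rw [pow_succ, Complex.I_sq]; ring
    have hI4 : Complex.I ^ 4 = 1 := by
      rw [show (4 : ℕ) = 2 * 2 from rfl, pow_mul, Complex.I_sq]; ring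
    ring_nf
    simp only [Complex.I_sq, hI3, hI4]
    ring
  have hint : IntervalIntegrable (fun ν : ℝ => (Complex.I * (ν : ℂ) - lam)⁻¹)
      volume (-ω) ω := by
    apply ContinuousOn.intervalIntegrable
    apply ContinuousOn.inv₀
    · exact ((continuous_const.mul Complex.continuous_ofReal).sub continuous_const).continuousOn
    · exact fun ν hν => hne ν (habs ν hν)
  rw [intervalIntegral.integral_eq_sub_of_hasDerivAt hderiv hint]
  -- endpoint algebra
  rw [hF]
  simp only
  have e1 : (((-ω : ℝ)) : ℂ) = -(ω : ℂ) := by push_cast; ring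
  rw [e1]
  have e2 : (1 + Complex.I * (-(ω : ℂ)) / lam) = 1 - Complex.I * (ω : ℂ) / lam := by ring
  have e3 : (1 - Complex.I * (-(ω : ℂ)) / lam) = 1 + Complex.I * (ω : ℂ) / lam := by ring
  have e4 : (-(ω : ℂ)) ^ 2 = (ω : ℂ) ^ 2 := by ring
  rw [e2, e3, e4, catan]
  have e5 : Complex.I * ((ω : ℂ) / lam) = Complex.I * (ω : ℂ) / lam := by ring
  rw [e5]
  have hI : (2 * Complex.I)⁻¹ = -(Complex.I) / 2 := by
    rw [eq_div_iff (two_ne_zero)]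
    rw [inv_mul_eq_iff_eq_mul₀ (by simp [Complex.I_ne_zero])]
    simp [Complex.I_mul_I]
    ring_nf
    simp [Complex.I_sq]
  rw [hI]
  ring
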